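/- For every u, v > 0 with u^p ≠ v^q, the Hessian quadratic form of the Bellman function B satisfies ∂²_{uu}B(u,v)·α² + 2∂²_{uv}B(u,v)·αβ + ∂²_{vv}B(u,v)·β² ≥ δ·(v^{2-q}α² + v^{q-2}β²) for all real α, β. -/

import Mathlib

open Filter Real Topology

noncomputable def Bell (p q δ u v : ℝ) : ℝ :=
  if v ^ q ≤ u ^ p then
    u ^ p + v ^ q + δ * ((2 / p) * u ^ p + (2 / q - 1) * v ^ q)
  else
    u ^ p + v ^ q + δ * (u ^ (2 : ℝ) * v ^ (2 - q))

lemma ev_lt_rpow {c x : ℝ} (p : ℝ) (hx : x ≠ 0) (h : c < x ^ p) :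
    ∀ᶠ y in 𝓝 x, c < y ^ p :=
  (Real.continuousAt_rpow_const x p (Or.inl hx)).eventually (eventually_gt_nhds h)

lemma ev_rpow_lt {c x : ℝ} (p : ℝ) (hx : x ≠ 0) (h : x ^ p < c) :
    ∀ᶠ y in 𝓝 x, y ^ p < c :=
  (Real.continuousAt_rpow_const x p (Or.inl hx)).eventually (eventually_lt_nhds h)

lemma deriv_u_region1 (p q δ v x : ℝ) (hp0 : p ≠ 0) (hx : 0 < x) (h : v ^ q < x ^ p) :
    deriv (fun u' => Bell p q δ u' v) x = (p + 2 * δ) * x ^ (p - 1) := by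
  have h1 : ∀ᶠ y in 𝓝 x, v ^ q < y ^ p := ev_lt_rpow p hx.ne' h
  have heq : (fun u' => Bell p q δ u' v) =ᶠ[𝓝 x]
      (fun u' => u' ^ p + v ^ q + δ * ((2 / p) * u' ^ p + (2 / q - 1) * v ^ q)) :=
    h1.mono fun y hy => by simp [Bell, hy.le]
  have h0 := Real.hasDerivAt_rpow_const (x := x) (p := p) (Or.inl hx.ne')
  have hd : HasDerivAt (fun u' : ℝ => u' ^ p + v ^ q + δ * ((2 / p) * u' ^ p + (2 / q - 1) * v ^ q))
      ((p + 2 * δ) * x ^ (p - 1)) x := by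
    have := (h0.add_const (v ^ q)).add (((h0.const_mul (2 / p)).add_const ((2 / q - 1) * v ^ q)).const_mul δ)
    refine this.congr_deriv ?_
    field_simp
  exact (hd.congr_of_eventuallyEq heq).deriv

lemma deriv_u_region2 (p q δ v x : ℝ) (hx : 0 < x) (h : x ^ p < v ^ q) :
    deriv (fun u' => Bell p q δ u' v) x = p * x ^ (p - 1) + 2 * δ * x * v ^ (2 - q) := by
  have h1 : ∀ᶠ y in 𝓝 x, y ^ p < v ^ q := ev_rpow_lt p hx.ne' h
  have heq : (fun u' => Bell p q δ u' v) =ᶠ[𝓝 x]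
      (fun u' => u' ^ p + v ^ q + δ * (u' ^ (2:ℝ) * v ^ (2 - q))) :=
    h1.mono fun y hy => by simp [Bell, not_le.mpr hy]
  have h0 := Real.hasDerivAt_rpow_const (x := x) (p := p) (Or.inl hx.ne')
  have h2 := Real.hasDerivAt_rpow_const (x := x) (p := (2:ℝ)) (Or.inl hx.ne')
  have hd : HasDerivAt (fun u' : ℝ => u' ^ p + v ^ q + δ * (u' ^ (2:ℝ) * v ^ (2 - q)))
      (p * x ^ (p - 1) + 2 * δ * x * v ^ (2 - q)) x := by
    have := (h0.add_const (v ^ q)).add ((h2.mul_const (v ^ (2 - q))).const_mul δ)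
    refine this.congr_deriv ?_
    rw [show (2:ℝ) - 1 = 1 by norm_num, Real.rpow_one]
    ring
  exact (hd.congr_of_eventuallyEq heq).deriv

lemma deriv_v_region1 (p q δ u y : ℝ) (hq0 : q ≠ 0) (hy : 0 < y) (h : y ^ q < u ^ p) :
    deriv (fun v' => Bell p q δ u v') y = (q + δ * (2 - q)) * y ^ (q - 1) := by
  have h1 : ∀ᶠ w in 𝓝 y, w ^ q < u ^ p := ev_rpow_lt q hy.ne' h
  have heq : (fun v' => Bell p q δ u v') =ᶠ[𝓝 y]
      (fun v' => u ^ p + v' ^ q + δ * ((2 / p) * u ^ p + (2 / q - 1) * v' ^ q)) :=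
    h1.mono fun w hw => by simp [Bell, hw.le]
  have h0 := Real.hasDerivAt_rpow_const (x := y) (p := q) (Or.inl hy.ne')
  have hd : HasDerivAt (fun v' : ℝ => u ^ p + v' ^ q + δ * ((2 / p) * u ^ p + (2 / q - 1) * v' ^ q))
      ((q + δ * (2 - q)) * y ^ (q - 1)) y := by
    have := ((h0.const_add (u ^ p)).add (((h0.const_mul (2 / q - 1)).const_add ((2 / p) * u ^ p)).const_mul δ))
    refine this.congr_deriv ?_
    field_simp
  exact (hd.congr_of_eventuallyEq heq).deriv

lemma deriv_v_region2 (p q δ u y : ℝ) (hy : 0 < y) (h : u ^ p < y ^ q) :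
    deriv (fun v' => Bell p q δ u v') y = q * y ^ (q - 1) + δ * (2 - q) * (u ^ (2:ℝ)) * y ^ (1 - q) := by
  have h1 : ∀ᶠ w in 𝓝 y, u ^ p < w ^ q := ev_lt_rpow q hy.ne' h
  have heq : (fun v' => Bell p q δ u v') =ᶠ[𝓝 y]
      (fun v' => u ^ p + v' ^ q + δ * (u ^ (2:ℝ) * v' ^ (2 - q))) :=
    h1.mono fun w hw => by simp [Bell, not_le.mpr hw]
  have h0 := Real.hasDerivAt_rpow_const (x := y) (p := q) (Or.inl hy.ne')
  have h2 := Real.hasDerivAt_rpow_const (x := y) (p := 2 - q) (Or.inl hy.ne')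
  have hd : HasDerivAt (fun v' : ℝ => u ^ p + v' ^ q + δ * (u ^ (2:ℝ) * v' ^ (2 - q)))
      (q * y ^ (q - 1) + δ * (2 - q) * (u ^ (2:ℝ)) * y ^ (1 - q)) y := by
    have := (h0.const_add (u ^ p)).add ((h2.const_mul (u ^ (2:ℝ))).const_mul δ)
    refine this.congr_deriv ?_
    rw [show (2:ℝ) - q - 1 = 1 - q by ring]
    ring
  exact (hd.congr_of_eventuallyEq heq).deriv
lemma deriv2_uu_region1 (p q δ v u : ℝ) (hp0 : p ≠ 0) (hu : 0 < u) (h : v ^ q < u ^ p) :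
    deriv (fun u' => deriv (fun u'' => Bell p q δ u'' v) u') u
      = (p + 2 * δ) * (p - 1) * u ^ (p - 2) := by
  have h1 : ∀ᶠ y in 𝓝 u, 0 < y ∧ v ^ q < y ^ p :=
    (eventually_gt_nhds hu).and (ev_lt_rpow p hu.ne' h)
  have heq : (fun u' => deriv (fun u'' => Bell p q δ u'' v) u') =ᶠ[𝓝 u]
      (fun u' => (p + 2 * δ) * u' ^ (p - 1)) :=
    h1.mono fun y hy => deriv_u_region1 p q δ v y hp0 hy.1 hy.2
  rw [heq.deriv_eq]
  have h0 := Real.hasDerivAt_rpow_const (x := u) (p := p - 1) (Or.inl hu.ne')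
  rw [(h0.const_mul (p + 2 * δ)).deriv]
  rw [show p - 1 - 1 = p - 2 by ring]; ring

lemma deriv2_uv_region1 (p q δ u v : ℝ) (hp0 : p ≠ 0) (hu : 0 < u) (hv : 0 < v) (h : v ^ q < u ^ p) :
    deriv (fun v' => deriv (fun u' => Bell p q δ u' v') u) v = 0 := by
  have h1 : ∀ᶠ w in 𝓝 v, w ^ q < u ^ p := ev_rpow_lt q hv.ne' h
  have heq : (fun v' => deriv (fun u' => Bell p q δ u' v') u) =ᶠ[𝓝 v]
      (fun _ => (p + 2 * δ) * u ^ (p - 1)) :=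
    h1.mono fun w hw => deriv_u_region1 p q δ w u hp0 hu hw
  rw [heq.deriv_eq, deriv_const]

lemma deriv2_vv_region1 (p q δ u v : ℝ) (hq0 : q ≠ 0) (hv : 0 < v) (h : v ^ q < u ^ p) :
    deriv (fun v' => deriv (fun v'' => Bell p q δ u v'') v') v
      = (q + δ * (2 - q)) * (q - 1) * v ^ (q - 2) := by
  have h1 : ∀ᶠ w in 𝓝 v, 0 < w ∧ w ^ q < u ^ p :=
    (eventually_gt_nhds hv).and (ev_rpow_lt q hv.ne' h)
  have heq : (fun v' => deriv (fun v'' => Bell p q δ u v'') v') =ᶠ[𝓝 v]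
      (fun v' => (q + δ * (2 - q)) * v' ^ (q - 1)) :=
    h1.mono fun w hw => deriv_v_region1 p q δ u w hq0 hw.1 hw.2
  rw [heq.deriv_eq]
  have h0 := Real.hasDerivAt_rpow_const (x := v) (p := q - 1) (Or.inl hv.ne')
  rw [(h0.const_mul (q + δ * (2 - q))).deriv]
  rw [show q - 1 - 1 = q - 2 by ring]; ring

lemma deriv2_uu_region2 (p q δ v u : ℝ) (hu : 0 < u) (h : u ^ p < v ^ q) :
    deriv (fun u' => deriv (fun u'' => Bell p q δ u'' v) u') u
      = p * (p - 1) * u ^ (p - 2) + 2 * δ * v ^ (2 - q) := by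
  have h1 : ∀ᶠ y in 𝓝 u, 0 < y ∧ y ^ p < v ^ q :=
    (eventually_gt_nhds hu).and (ev_rpow_lt p hu.ne' h)
  have heq : (fun u' => deriv (fun u'' => Bell p q δ u'' v) u') =ᶠ[𝓝 u]
      (fun u' => p * u' ^ (p - 1) + 2 * δ * u' * v ^ (2 - q)) :=
    h1.mono fun y hy => deriv_u_region2 p q δ v y hy.1 hy.2
  rw [heq.deriv_eq]
  have h0 := Real.hasDerivAt_rpow_const (x := u) (p := p - 1) (Or.inl hu.ne')
  have hlin : HasDerivAt (fun y : ℝ => 2 * δ * y * v ^ (2 - q)) (2 * δ * v ^ (2 - q)) u := by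
    have := ((hasDerivAt_id u).const_mul (2 * δ)).mul_const (v ^ (2 - q))
    refine this.congr_deriv ?_; ring
  rw [(show HasDerivAt (fun u' => p * u' ^ (p - 1) + 2 * δ * u' * v ^ (2 - q)) _ u from (h0.const_mul p).add hlin).deriv]
  rw [show p - 1 - 1 = p - 2 by ring]; ring

lemma deriv2_uv_region2 (p q δ u v : ℝ) (hu : 0 < u) (hv : 0 < v) (h : u ^ p < v ^ q) :
    deriv (fun v' => deriv (fun u' => Bell p q δ u' v') u) v
      = 2 * δ * (2 - q) * u * v ^ (1 - q) := by
  have h1 : ∀ᶠ w in 𝓝 v, u ^ p < w ^ q := ev_lt_rpow q hv.ne' h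
  have heq : (fun v' => deriv (fun u' => Bell p q δ u' v') u) =ᶠ[𝓝 v]
      (fun w => p * u ^ (p - 1) + 2 * δ * u * w ^ (2 - q)) :=
    h1.mono fun w hw => deriv_u_region2 p q δ w u hu hw
  rw [heq.deriv_eq]
  have h0 := Real.hasDerivAt_rpow_const (x := v) (p := 2 - q) (Or.inl hv.ne')
  rw [((h0.const_mul (2 * δ * u)).const_add (p * u ^ (p - 1))).deriv]
  rw [show 2 - q - 1 = 1 - q by ring]; ring

lemma deriv2_vv_region2 (p q δ u v : ℝ) (hv : 0 < v) (h : u ^ p < v ^ q) :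
    deriv (fun v' => deriv (fun v'' => Bell p q δ u v'') v') v
      = q * (q - 1) * v ^ (q - 2) + δ * (2 - q) * (1 - q) * (u ^ (2:ℝ)) * v ^ (-q) := by
  have h1 : ∀ᶠ w in 𝓝 v, 0 < w ∧ u ^ p < w ^ q :=
    (eventually_gt_nhds hv).and (ev_lt_rpow q hv.ne' h)
  have heq : (fun v' => deriv (fun v'' => Bell p q δ u v'') v') =ᶠ[𝓝 v]
      (fun w => q * w ^ (q - 1) + δ * (2 - q) * (u ^ (2:ℝ)) * w ^ (1 - q)) :=
    h1.mono fun w hw => deriv_v_region2 p q δ u w hw.1 hw.2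
  rw [heq.deriv_eq]
  have h0 := Real.hasDerivAt_rpow_const (x := v) (p := q - 1) (Or.inl hv.ne')
  have h2 := Real.hasDerivAt_rpow_const (x := v) (p := 1 - q) (Or.inl hv.ne')
  rw [(show HasDerivAt (fun w => q * w ^ (q - 1) + δ * (2 - q) * (u ^ (2:ℝ)) * w ^ (1 - q)) _ v from (h0.const_mul q).add (h2.const_mul (δ * (2 - q) * (u ^ (2:ℝ))))).deriv]
  rw [show q - 1 - 1 = q - 2 by ring, show 1 - q - 1 = -q by ring]; ring
lemma quad_nonneg (A C D a b : ℝ) (hA : 0 < A) (h : C ^ 2 ≤ A * D) :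
    0 ≤ A * a ^ 2 + 2 * C * a * b + D * b ^ 2 := by
  nlinarith [sq_nonneg (A * a + C * b), mul_nonneg (sub_nonneg.mpr h) (sq_nonneg b), sq_nonneg b]

lemma region1_ineq (p q δ X Y P2 α β : ℝ) (hp : 2 ≤ p) (hq1 : 1 < q) (hq2 : q ≤ 2)
    (hδ : δ = q * (q - 1) / 8) (hX : 0 < X) (hY : 0 < Y) (hP2 : 0 < P2) (hXP : X ≤ P2) :
    δ * (X * α ^ 2 + Y * β ^ 2) ≤
      (p + 2 * δ) * (p - 1) * P2 * α ^ 2 + 2 * 0 * α * β +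
      (q + δ * (2 - q)) * (q - 1) * Y * β ^ 2 := by
  have hδpos : 0 < δ := by rw [hδ]; nlinarith
  have hδ4 : δ ≤ 1 / 4 := by rw [hδ]; nlinarith
  have e1 : δ * X * α ^ 2 ≤ (p + 2 * δ) * (p - 1) * P2 * α ^ 2 := by
    have c1 : δ * X ≤ (p + 2 * δ) * (p - 1) * P2 := by
      have c2 : (2:ℝ) * 1 ≤ (p + 2 * δ) * (p - 1) :=
        mul_le_mul (by linarith) (by linarith) (by norm_num) (by linarith)
      nlinarith [mul_le_mul hδ4 hXP hX.le (by norm_num : (0:ℝ) ≤ 1/4)]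
    exact mul_le_mul_of_nonneg_right c1 (sq_nonneg α)
  have e2 : δ * Y * β ^ 2 ≤ (q + δ * (2 - q)) * (q - 1) * Y * β ^ 2 := by
    have c1 : δ * Y ≤ (q + δ * (2 - q)) * (q - 1) * Y := by
      have c3 : δ ≤ (q + δ * (2 - q)) * (q - 1) := by
        have c4 : 0 ≤ δ * (2 - q) * (q - 1) := by
          have h2q : (0:ℝ) ≤ 2 - q := by linarith
          have hq1' : (0:ℝ) ≤ q - 1 := by linarith
          positivity
        nlinarith [hδ]
      nlinarith
    exact mul_le_mul_of_nonneg_right c1 (sq_nonneg β)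
  nlinarith [e1, e2]

set_option maxHeartbeats 1000000 in
lemma region2_ineq (p q δ u X Y Z W P2 α β : ℝ) (hp : 2 ≤ p) (hq1 : 1 < q) (hq2 : q ≤ 2)
    (hδ : δ = q * (q - 1) / 8) (hu : 0 < u) (hX : 0 < X) (hY : 0 < Y) (hZ : 0 < Z)
    (hW : 0 < W) (hP2 : 0 < P2) (hXY : X * Y = 1) (hZZ : Z * Z = W * X)
    (hWY : u * u * W ≤ Y) :
    δ * (X * α ^ 2 + Y * β ^ 2) ≤
      (p * (p - 1) * P2 + 2 * δ * X) * α ^ 2 +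
      2 * (2 * δ * (2 - q) * u * Z) * α * β +
      (q * (q - 1) * Y + δ * (2 - q) * (1 - q) * (u * u) * W) * β ^ 2 := by
  have hδpos : 0 < δ := by rw [hδ]; nlinarith
  have hδ4 : δ ≤ 1 / 4 := by rw [hδ]; nlinarith
  have hPP : 0 < p * (p - 1) * P2 := by
    have h1 : (0:ℝ) < p := by linarith
    have h2 : (0:ℝ) < p - 1 := by linarith
    positivity
  have hA0pos : 0 < p * (p - 1) * P2 + δ * X := by nlinarith [mul_pos hδpos hX]
  have hA0' : δ * X ≤ p * (p - 1) * P2 + δ * X := by linarith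
  have hD0' : (27/4) * δ * Y ≤ q * (q - 1) * Y + δ * (2 - q) * (1 - q) * (u * u) * W - δ * Y := by
    have h5 : δ * (2 - q) * (q - 1) * (u * u * W) ≤ δ * (2 - q) * (q - 1) * Y := by
      apply mul_le_mul_of_nonneg_left hWY
      have h2q : (0:ℝ) ≤ 2 - q := by linarith
      have hq1' : (0:ℝ) ≤ q - 1 := by linarith
      positivity
    have hq14 : (2 - q) * (q - 1) ≤ 1 / 4 := by nlinarith [sq_nonneg (q - 3/2)]
    have h6Y : q * (q - 1) * Y = 8 * δ * Y := by rw [hδ]; ring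
    have h7 := mul_le_mul_of_nonneg_right hq14 (mul_pos hδpos hY).le
    nlinarith [h5, h6Y, h7]
  have h8 : u * u * (Z * Z) ≤ 1 := by
    rw [hZZ]
    calc u * u * (W * X) = (u * u * W) * X := by ring
      _ ≤ Y * X := mul_le_mul_of_nonneg_right hWY hX.le
      _ = X * Y := by ring
      _ = 1 := hXY
  have h9 : (2 - q) ^ 2 ≤ 1 := by nlinarith
  have h11 : δ ^ 2 * (2 - q) ^ 2 ≤ δ ^ 2 * 1 := mul_le_mul_of_nonneg_left h9 (sq_nonneg δ)
  have hC2 : (2 * δ * (2 - q) * u * Z) ^ 2 ≤ 4 * δ ^ 2 := by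
    calc (2 * δ * (2 - q) * u * Z) ^ 2 = (2 * δ * (2 - q)) ^ 2 * (u * u * (Z * Z)) := by ring
      _ ≤ (2 * δ * (2 - q)) ^ 2 * 1 := mul_le_mul_of_nonneg_left h8 (sq_nonneg _)
      _ = 4 * (δ ^ 2 * (2 - q) ^ 2) := by ring
      _ ≤ 4 * (δ ^ 2 * 1) := by linarith
      _ = 4 * δ ^ 2 := by ring
  have h12 : (δ * X) * ((27/4) * δ * Y) ≤
      (p * (p - 1) * P2 + δ * X) *
        (q * (q - 1) * Y + δ * (2 - q) * (1 - q) * (u * u) * W - δ * Y) :=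
    mul_le_mul hA0' hD0' (by positivity) hA0pos.le
  have h14 : (δ * X) * ((27/4) * δ * Y) = (27/4) * δ ^ 2 := by
    rw [show (δ * X) * ((27/4) * δ * Y) = (27/4) * δ ^ 2 * (X * Y) by ring, hXY, mul_one]
  have hAD : (2 * δ * (2 - q) * u * Z) ^ 2 ≤
      (p * (p - 1) * P2 + δ * X) *
        (q * (q - 1) * Y + δ * (2 - q) * (1 - q) * (u * u) * W - δ * Y) := by
    linarith [h12, h14, hC2, sq_nonneg δ]
  have key := quad_nonneg _ _ _ α β hA0pos hAD
  linarith [key]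

theorem bellman_hessian_bound (p q δ u v : ℝ) (hp : 2 ≤ p) (hq : q = p / (p - 1))
    (hδ : δ = q * (q - 1) / 8) (hu : 0 < u) (hv : 0 < v) (hne : u ^ p ≠ v ^ q)
    (α β : ℝ) :
    δ * (v ^ (2 - q) * α ^ 2 + v ^ (q - 2) * β ^ 2) ≤
      (deriv (fun u' => deriv (fun u'' => Bell p q δ u'' v) u') u) * α ^ 2 +
      2 * (deriv (fun v' => deriv (fun u' => Bell p q δ u' v') u) v) * α * β +
      (deriv (fun v' => deriv (fun v'' => Bell p q δ u v'') v') v) * β ^ 2 := by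
  have hp1 : (1:ℝ) < p := by linarith
  have hp0 : p ≠ 0 := by linarith
  have hpm : (0:ℝ) < p - 1 := by linarith
  have hq1 : 1 < q := by rw [hq, lt_div_iff₀ hpm]; linarith
  have hq2 : q ≤ 2 := by rw [hq, div_le_iff₀ hpm]; linarith
  have hq0 : q ≠ 0 := by linarith
  have hpq : (p - 1) * q = p := by rw [hq]; field_simp
  have hX : (0:ℝ) < v ^ (2 - q) := Real.rpow_pos_of_pos hv _
  have hY : (0:ℝ) < v ^ (q - 2) := Real.rpow_pos_of_pos hv _
  have hP2 : (0:ℝ) < u ^ (p - 2) := Real.rpow_pos_of_pos hu _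
  rcases lt_or_gt_of_ne hne with h | h
  · -- region 2 : u^p < v^q
    rw [deriv2_uu_region2 p q δ v u hu h, deriv2_uv_region2 p q δ u v hu hv h,
      deriv2_vv_region2 p q δ u v hv h,
      show u ^ (2:ℝ) = u * u by
        rw [show (2:ℝ) = ((2:ℕ):ℝ) by norm_num, Real.rpow_natCast]; ring]
    have hZ : (0:ℝ) < v ^ (1 - q) := Real.rpow_pos_of_pos hv _
    have hW : (0:ℝ) < v ^ (-q) := Real.rpow_pos_of_pos hv _
    have hXY : v ^ (2 - q) * v ^ (q - 2) = 1 := by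
      rw [← Real.rpow_add hv]; norm_num
    have hZZ : v ^ (1 - q) * v ^ (1 - q) = v ^ (-q) * v ^ (2 - q) := by
      rw [← Real.rpow_add hv, ← Real.rpow_add hv]; ring_nf
    have hql : u ≤ v ^ (q - 1) := by
      have h1 : u ^ p ≤ v ^ q := h.le
      have h2 : (u ^ p) ^ p⁻¹ ≤ (v ^ q) ^ p⁻¹ :=
        Real.rpow_le_rpow (Real.rpow_pos_of_pos hu p).le h1 (by positivity)
      rwa [Real.rpow_rpow_inv hu.le hp0, ← Real.rpow_mul hv.le,
        show q * p⁻¹ = q - 1 by field_simp; linarith [hpq]] at h2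
    have hWY : u * u * v ^ (-q) ≤ v ^ (q - 2) := by
      have h3 : u * u ≤ v ^ (q - 1) * v ^ (q - 1) :=
        mul_le_mul hql hql hu.le (Real.rpow_nonneg hv.le _)
      calc u * u * v ^ (-q) ≤ v ^ (q - 1) * v ^ (q - 1) * v ^ (-q) :=
            mul_le_mul_of_nonneg_right h3 hW.le
        _ = v ^ (q - 2) := by
            rw [← Real.rpow_add hv, ← Real.rpow_add hv]; ring_nf
    exact region2_ineq p q δ u _ _ _ _ _ α β hp hq1 hq2 hδ hu hX hY hZ hW hP2 hXY hZZ hWY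
  · -- region 1 : v^q < u^p
    rw [deriv2_uu_region1 p q δ v u hp0 hu h, deriv2_uv_region1 p q δ u v hp0 hu hv h,
      deriv2_vv_region1 p q δ u v hq0 hv h]
    have hvu : v ≤ u ^ (p - 1) := by
      have h1 : v ^ q ≤ u ^ p := h.le
      have h2 : (v ^ q) ^ q⁻¹ ≤ (u ^ p) ^ q⁻¹ :=
        Real.rpow_le_rpow (Real.rpow_pos_of_pos hv q).le h1 (by positivity)
      rwa [Real.rpow_rpow_inv hv.le hq0, ← Real.rpow_mul hu.le,
        show p * q⁻¹ = p - 1 by field_simp; linarith [hpq]] at h2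
    have hXP : v ^ (2 - q) ≤ u ^ (p - 2) := by
      have h3 : v ^ (2 - q) ≤ (u ^ (p - 1)) ^ (2 - q) :=
        Real.rpow_le_rpow hv.le hvu (by linarith)
      rwa [← Real.rpow_mul (by positivity),
        show (p - 1) * (2 - q) = p - 2 by linear_combination -hpq] at h3
    exact region1_ineq p q δ _ _ _ α β hp hq1 hq2 hδ hX hY hP2 hXP
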